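/- For 0 < α < 1, θ > 0, b ≥ 0, n ≥ 1 and 1 ≤ K ≤ n with n − αK > 0, define ψ(v) = e^{-(θ/α)[(v+b)^α − v^α]} · (v/(v+b))^{n−αK+1} · (θ(v+b)^α + (n−αK))/(θ v^α + (n−αK)) for v > 0. Then 0 < ψ(v) ≤ 1 for all v > 0 when θ(v+b)^α + (n−αK) ≤ e^{(θ/α)[(v+b)^α − v^α]} ((v+b)/v)^{n−αK+1} (θ v^α + (n−αK)); in particular ψ(v) ≤ 1 holds for all v > 0. -/

import Mathlib

open Real

/-- The acceptance ratio of the rejection sampler for the augmented variable of the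
normalized generalized gamma process satisfies `0 < ψ(v) ≤ 1` for all `v > 0`, where
`ψ(v) = e^{-(θ/α)[(v+b)^α - v^α]} (v/(v+b))^{n-αK+1}
        (θ(v+b)^α + (n-αK))/(θ v^α + (n-αK))`. -/
theorem rejection_ratio_le_one (θ α b : ℝ) (n K : ℕ)
    (hα0 : 0 < α) (hα1 : α < 1) (hθ : 0 < θ) (hb : 0 ≤ b)
    (hn : 1 ≤ n) (hK1 : 1 ≤ K) (hKn : K ≤ n) (hnK : 0 < (n : ℝ) - α * K) :
    ∀ v : ℝ, 0 < v →
      0 < Real.exp (-(θ / α) * ((v + b) ^ α - v ^ α)) *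
            (v / (v + b)) ^ ((n : ℝ) - α * K + 1) *
            ((θ * (v + b) ^ α + ((n : ℝ) - α * K)) / (θ * v ^ α + ((n : ℝ) - α * K))) ∧
        Real.exp (-(θ / α) * ((v + b) ^ α - v ^ α)) *
            (v / (v + b)) ^ ((n : ℝ) - α * K + 1) *
            ((θ * (v + b) ^ α + ((n : ℝ) - α * K)) / (θ * v ^ α + ((n : ℝ) - α * K))) ≤ 1 := by
  intro v hv
  set c : ℝ := (n : ℝ) - α * K with hc_def
  have hc : 0 < c := hnK
  have hw : 0 < v + b := by linarith
  have hvw : v ≤ v + b := by linarith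
  have hvα : 0 < v ^ α := Real.rpow_pos_of_pos hv α
  have hwα : 0 < (v + b) ^ α := Real.rpow_pos_of_pos hw α
  have hden : 0 < θ * v ^ α + c := by positivity
  have hnum : 0 < θ * (v + b) ^ α + c := by positivity
  have hvwpos : 0 < v / (v + b) := div_pos hv hw
  have hP : 0 < (v / (v + b)) ^ (c + 1) := Real.rpow_pos_of_pos hvwpos _
  constructor
  · positivity
  -- exp factor ≤ 1
  have hvw_rpow : v ^ α ≤ (v + b) ^ α := Real.rpow_le_rpow hv.le hvw hα0.le
  have hE : Real.exp (-(θ / α) * ((v + b) ^ α - v ^ α)) ≤ 1 := by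
    rw [Real.exp_le_one_iff]
    have h1 : 0 < θ / α := div_pos hθ hα0
    nlinarith
  -- ratio ≤ ((v+b)/v)^α
  have hone_le : (1 : ℝ) ≤ (v + b) / v := (one_le_div hv).mpr hvw
  have hQ : (1 : ℝ) ≤ ((v + b) / v) ^ α := Real.one_le_rpow hone_le hα0.le
  have hdiv : ((v + b) / v) ^ α = (v + b) ^ α / v ^ α := Real.div_rpow hw.le hv.le α
  have hR : (θ * (v + b) ^ α + c) / (θ * v ^ α + c) ≤ ((v + b) / v) ^ α := by
    rw [div_le_iff₀ hden, hdiv]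
    have : (v + b) ^ α / v ^ α * (θ * v ^ α) = θ * (v + b) ^ α := by
      field_simp
    have h2 : c ≤ (v + b) ^ α / v ^ α * c := by
      nlinarith [hQ, hdiv]
    nlinarith [h2, this]
  -- (v/(v+b))^(c+1) * ((v+b)/v)^α ≤ 1
  have hinv : (v / (v + b)) = ((v + b) / v)⁻¹ := by
    field_simp
  have hPQ : (v / (v + b)) ^ (c + 1) * ((v + b) / v) ^ α ≤ 1 := by
    have hx : (0:ℝ) < (v + b) / v := by positivity
    rw [hinv, ← Real.rpow_neg_one ((v + b) / v), ← Real.rpow_mul hx.le,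
      ← Real.rpow_add hx]
    apply Real.rpow_le_one_of_one_le_of_nonpos hone_le
    push_cast
    nlinarith
  calc Real.exp (-(θ / α) * ((v + b) ^ α - v ^ α)) * (v / (v + b)) ^ (c + 1) *
        ((θ * (v + b) ^ α + c) / (θ * v ^ α + c))
      ≤ 1 * (v / (v + b)) ^ (c + 1) * (((v + b) / v) ^ α) := by
        apply mul_le_mul (mul_le_mul_of_nonneg_right hE hP.le) hR
          (by positivity) (by positivity)
    _ = (v / (v + b)) ^ (c + 1) * ((v + b) / v) ^ α := by ring
    _ ≤ 1 := hPQ
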